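/- Assume the standard setup, and let ℓ ≥ 3 be an integer with q ≡ 2^ℓ − 1 (mod 2^{ℓ+1}). Let L be the unique subfield of F with q elements (so K ⊆ L ⊆ F), let m = (q0−1)/2, and let H_m be the unique subgroup of Fˣ of order m(q+1). Then the following are equivalent: (a) there exists γ ∈ Fˣ with (γ^{q−1})^{2^{ℓ−1}} = 1 such that γ (as an element of F) cannot be written as h1 + h2 with h1, h2 ∈ H_m; (b) there exists x ∈ L with x ≠ 0 such that for every nonzero square α of K, the element x² − α of L is a nonzero square in L. -/

import Mathlib

open Polynomial in
lemma roots_setup {F : Type*} [Field F] [Fintype F] {n : ℕ} (hn : 2 ≤ n) :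
    ((X : F[X]) ^ n - X ≠ 0) ∧ ((X : F[X]) ^ n - X).natDegree ≤ n := by
  constructor
  · intro h0
    have : (X : F[X]) ^ n = X := by rwa [sub_eq_zero] at h0
    have := congrArg natDegree this
    simp [natDegree_X_pow, natDegree_X] at this
    omega
  · refine le_trans (natDegree_sub_le _ _) ?_
    simp [natDegree_X_pow, natDegree_X]
    omega

open Polynomial in
lemma subfield_mem_iff_pow {F : Type*} [Field F] [Fintype F] (L : Subfield F) {n : ℕ}
    (hn : 2 ≤ n) (hLn : Nat.card L = n) (x : F) : x ∈ L ↔ x ^ n = x := by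
  classical
  have : Fintype L := Fintype.ofFinite L
  have hfwd : ∀ y : F, y ∈ L → y ^ n = y := by
    intro y hy
    have hcard : Fintype.card L = n := by rw [← Nat.card_eq_fintype_card, hLn]
    have := FiniteField.pow_card (⟨y, hy⟩ : L)
    rw [hcard] at this
    have h2 := congrArg (Subtype.val) this
    push_cast at h2
    exact h2
  constructor
  · exact hfwd x
  · intro hx
    obtain ⟨hP0, hdeg⟩ := roots_setup (F := F) hn
    set P : F[X] := X ^ n - X with hP
    have hroot : ∀ y : F, y ^ n = y → y ∈ P.roots.toFinset := by
      intro y hy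
      rw [Multiset.mem_toFinset, mem_roots hP0]
      simp [hP, IsRoot, hy]
    have hsub : Set.toFinset (L : Set F) ⊆ P.roots.toFinset := by
      intro y hy
      rw [Set.mem_toFinset] at hy
      exact hroot y (hfwd y hy)
    have hc1 : (Set.toFinset (L : Set F)).card = n := by
      rw [Set.toFinset_card]
      rw [← Nat.card_eq_fintype_card]
      rw [Nat.card_congr (Equiv.setCongr (rfl : (L : Set F) = L))]
      exact hLn
    have hc2 : P.roots.toFinset.card ≤ n :=
      le_trans (Multiset.toFinset_card_le _) (le_trans (P.card_roots') hdeg)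
    have heq := Finset.eq_of_subset_of_card_le hsub (by omega)
    have : x ∈ Set.toFinset (L : Set F) := heq ▸ hroot x hx
    rwa [Set.mem_toFinset] at this

open Polynomial in
lemma subgroup_mem_iff_pow {F : Type*} [Field F] [Fintype F] (H : Subgroup Fˣ) {d : ℕ}
    (hd : 1 ≤ d) (hHd : Nat.card H = d) (g : Fˣ) : g ∈ H ↔ g ^ d = 1 := by
  classical
  have : Fintype H := Fintype.ofFinite H
  have hfwd : ∀ u : Fˣ, u ∈ H → u ^ d = 1 := by
    intro u hu
    have : (⟨u, hu⟩ : H) ^ d = 1 := by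
      rw [← hHd]; exact pow_card_eq_one'
    have h2 := congrArg (Subtype.val) this
    push_cast at h2
    exact h2
  constructor
  · exact hfwd g
  · intro hg
    set P : F[X] := X ^ d - C 1 with hP
    have hP0 : P ≠ 0 := X_pow_sub_C_ne_zero (by omega) 1
    have hdeg : P.natDegree = d := natDegree_X_pow_sub_C
    set A : Finset F := Finset.image (fun u : H => ((u : Fˣ) : F)) Finset.univ with hA
    have hinj : Function.Injective (fun u : H => ((u : Fˣ) : F)) := by
      intro a b hab
      exact Subtype.ext (Units.ext hab)
    have hAcard : A.card = d := by
      rw [hA, Finset.card_image_of_injective _ hinj, Finset.card_univ,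
        ← Nat.card_eq_fintype_card, hHd]
    have hroot : ∀ u : Fˣ, u ^ d = 1 → ((u : F) ∈ P.roots.toFinset) := by
      intro u hu
      rw [Multiset.mem_toFinset, mem_roots hP0]
      have : ((u : F)) ^ d = 1 := by
        have := congrArg (Units.val) hu
        push_cast at this
        exact this
      simp [hP, IsRoot, this]
    have hsub : A ⊆ P.roots.toFinset := by
      intro y hy
      rw [hA, Finset.mem_image] at hy
      obtain ⟨u, _, rfl⟩ := hy
      exact hroot u (hfwd u u.2)
    have hc2 : P.roots.toFinset.card ≤ d :=
      le_trans (Multiset.toFinset_card_le _) (le_trans (P.card_roots') (le_of_eq hdeg))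
    have heq := Finset.eq_of_subset_of_card_le hsub (by omega)
    have hmem : (g : F) ∈ A := heq ▸ hroot g hg
    rw [hA, Finset.mem_image] at hmem
    obtain ⟨u, _, hu⟩ := hmem
    have : (u : Fˣ) = g := Units.ext hu
    exact this ▸ u.2

lemma subfield_sq_iff {F : Type*} [Field F] [Fintype F] (L : Subfield F) {n : ℕ}
    (hn : 3 ≤ n) (hodd : n % 2 = 1) (hLn : Nat.card L = n) {u : F} (hu : u ∈ L)
    (hu0 : u ≠ 0) : (∃ w ∈ L, u = w ^ 2) ↔ u ^ ((n - 1) / 2) = 1 := by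
  classical
  have : Fintype L := Fintype.ofFinite L
  have hcard : Fintype.card L = n := by rw [← Nat.card_eq_fintype_card, hLn]
  have h2 : 2 * ((n - 1) / 2) = n - 1 := by omega
  constructor
  · rintro ⟨w, hw, rfl⟩
    have hw0 : w ≠ 0 := by rintro rfl; simp at hu0
    have hw0' : (⟨w, hw⟩ : L) ≠ 0 := by
      intro h; exact hw0 (congrArg Subtype.val h)
    have := FiniteField.pow_card_sub_one_eq_one (⟨w, hw⟩ : L) hw0'
    rw [hcard] at this
    have hwF : w ^ (n - 1) = 1 := by
      have h2 := congrArg (Subtype.val) this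
      push_cast at h2
      exact h2
    rw [← pow_mul, h2, hwF]
  · intro h1
    have hchar : ringChar L ≠ 2 := by
      intro hc
      have := FiniteField.even_card_of_char_two (F := L) hc
      rw [hcard] at this; omega
    have hu0' : (⟨u, hu⟩ : L) ≠ 0 := by
      intro h; exact hu0 (congrArg Subtype.val h)
    have hiff := FiniteField.isSquare_iff hchar hu0'
    rw [hcard] at hiff
    have hpow : (⟨u, hu⟩ : L) ^ (n / 2) = 1 := by
      have : n / 2 = (n - 1) / 2 := by omega
      rw [this]
      apply Subtype.ext
      push_cast
      exact h1
    obtain ⟨w, hw⟩ := hiff.mpr hpow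
    refine ⟨(w : F), w.2, ?_⟩
    have := congrArg (Subtype.val) hw
    push_cast at this
    rw [this, sq]

lemma lemB {F : Type*} [Field F] {q c M : ℕ} (hqodd : Odd q)
    (hM : M = (q + 1) * c)
    (hfrob : ∀ a b : F, (a + b) ^ q = a ^ q + b ^ q)
    (h2F : (2 : F) ≠ 0)
    {γ y α1 δ : F} (hγ0 : γ ≠ 0) (hα10 : α1 ≠ 0)
    (hyq : y ^ q = y) (hα1q : α1 ^ q = α1) (hα1M : α1 ^ M = 1)
    (hy2ne : y + 2 ≠ 0)
    (hγN : γ ^ (q + 1) = α1 ^ 2 * (y + 2))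
    (hδ2 : δ ^ 2 = y ^ 2 - 4) (hδq : δ ^ q = -δ) :
    ∃ h1 h2 : F, h1 ^ M = 1 ∧ h2 ^ M = 1 ∧ γ = h1 + h2 := by
  have h2q : (2 : F) ^ q = 2 := by
    have := hfrob 1 1; norm_num at this; exact this
  set z : F := (y + δ) / 2 with hz
  have hzq : z ^ q = (y - δ) / 2 := by
    rw [hz, div_pow, hfrob, hyq, hδq, h2q, sub_eq_add_neg]
  have hkey : (y + δ) * (y - δ) = 4 := by linear_combination (-1 : F) * hδ2
  have h4F : (4 : F) ≠ 0 := by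
    intro h; apply h2F; have : (2:F)*2 = 4 := by norm_num
    rcases mul_eq_zero.mp (this.trans h) with h'|h' <;> exact h'
  have hzzq : z * z ^ q = 1 := by
    rw [hzq, hz, div_mul_div_comm, hkey]
    norm_num
    exact h4F
  have hzzy : z + z ^ q = y := by
    rw [hzq, hz]; field_simp; ring
  have hz1 : z + 1 ≠ 0 := by
    intro h
    have hzm1 : z = -1 := by linear_combination h
    have hzqm1 : z ^ q = -1 := by rw [hzm1]; exact hqodd.neg_one_pow
    apply hy2ne
    rw [← hzzy, hzqm1, hzm1]; norm_num
  set h : F := γ / (α1 * (z + 1)) with hh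
  have hd0 : α1 * (z + 1) ≠ 0 := mul_ne_zero hα10 hz1
  have hsum : α1 * z * h + α1 * h = γ := by
    rw [hh]; field_simp
  have hα1q1 : α1 ^ (q + 1) = α1 ^ 2 := by
    rw [pow_succ, pow_two, hα1q]
  have he1 : (z + 1) ^ q = z ^ q + 1 := by
    have := hfrob z 1; simpa using this
  have hz1pow : (z + 1) ^ (q + 1) = y + 2 := by
    rw [pow_succ, he1]
    linear_combination hzzq + hzzy
  have hhq1 : h ^ (q + 1) = 1 := by
    rw [hh, div_pow, mul_pow, hα1q1, hz1pow, hγN]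
    rw [div_self]
    exact mul_ne_zero (pow_ne_zero _ hα10) hy2ne
  have hzq1 : z ^ (q + 1) = 1 := by rw [pow_succ, mul_comm, hzzq]
  refine ⟨α1 * z * h, α1 * h, ?_, ?_, hsum.symm⟩
  · rw [mul_pow, mul_pow, hα1M, hM, pow_mul, pow_mul, hzq1, hhq1]
    simp
  · rw [mul_pow, hα1M, hM, pow_mul, hhq1]
    simp

lemma lemC {F : Type*} [Field F] {q : ℕ} (hqodd : Odd q)
    (hfrob : ∀ a b : F, (a + b) ^ q = a ^ q + b ^ q)
    (h2F : (2 : F) ≠ 0)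
    {x h1 h2 α β : F}
    (hx0 : x ≠ 0) (hxL : x ^ q = x)
    (hq21 : h1 ^ q ^ 2 = h1) (hq22 : h2 ^ q ^ 2 = h2)
    (ha : h1 ^ (q + 1) = α ^ 2) (hb : h2 ^ (q + 1) = β ^ 2)
    (Hplus : ∃ v : F, v ≠ 0 ∧ v ^ q = v ∧ x ^ 2 - (α + β) ^ 2 = v ^ 2)
    (Hminus : ∃ v : F, v ≠ 0 ∧ v ^ q = v ∧ x ^ 2 - (α - β) ^ 2 = v ^ 2)
    (hsum : x = h1 + h2) : False := by
  obtain ⟨v1, hv10, hv1q, hv1⟩ := Hplus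
  obtain ⟨v2, hv20, hv2q, hv2⟩ := Hminus
  obtain ⟨w, hw⟩ : ∃ w : F, w = h1 * h2 ^ q := ⟨_, rfl⟩
  have hqq : q * q = q ^ 2 := by ring
  have hwq : w ^ q = h1 ^ q * h2 := by
    rw [hw, mul_pow, ← pow_mul, hqq, hq22]
  have hwqq : (w ^ q) ^ q = w := by
    rw [hwq, mul_pow, ← pow_mul, hqq, hq21, hw]
  have hxq2 : x ^ 2 = x ^ q * x := by rw [hxL, pow_two]
  have hexp : x ^ q = h1 ^ q + h2 ^ q := by rw [hsum, hfrob]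
  have e1 : h1 ^ (q + 1) = h1 ^ q * h1 := by rw [pow_succ]
  have e2 : h2 ^ (q + 1) = h2 ^ q * h2 := by rw [pow_succ]
  rw [e1] at ha; rw [e2] at hb
  have hxx : w + w ^ q = x ^ 2 - α ^ 2 - β ^ 2 := by
    rw [hxq2, hexp, hsum, hwq, hw]
    linear_combination (-1 : F) * ha - hb
  have hwn : w ^ q * w = α ^ 2 * β ^ 2 := by
    rw [hwq, hw]
    linear_combination (h2 ^ q * h2) * ha + (α ^ 2) * hb
  obtain ⟨d, hd⟩ : ∃ d : F, d = w - w ^ q := ⟨_, rfl⟩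
  have hfrobsub : ∀ a b : F, (a - b) ^ q = a ^ q - b ^ q := by
    intro a b
    have hneg : (-b) ^ q = -(b ^ q) := hqodd.neg_pow b
    have := hfrob a (-b)
    rw [hneg] at this
    simpa [sub_eq_add_neg] using this
  have hdq : d ^ q = -d := by
    rw [hd, hfrobsub, hwqq]; ring
  have hd2 : d ^ 2 = (v1 * v2) ^ 2 := by
    linear_combination (d + w - w ^ q) * hd + (w + w ^ q + x ^ 2 - α ^ 2 - β ^ 2) * hxx +
      (-4 : F) * hwn + (x ^ 2 - (α - β) ^ 2) * hv1 + v1 ^ 2 * hv2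
  have hdv : d = v1 * v2 ∨ d = -(v1 * v2) := by
    have h0 : (d - v1 * v2) * (d + v1 * v2) = 0 := by linear_combination hd2
    rcases mul_eq_zero.mp h0 with h | h
    · left; linear_combination h
    · right; linear_combination h
  have hdqd : d ^ q = d := by
    have hvq : (v1 * v2) ^ q = v1 * v2 := by rw [mul_pow, hv1q, hv2q]
    rcases hdv with h | h
    · rw [h, hvq]
    · rw [h, hqodd.neg_pow, hvq]
  have hd0 : d = 0 := by
    have h0 : (2 : F) * d = 0 := by linear_combination hdq - hdqd
    rcases mul_eq_zero.mp h0 with h | h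
    · exact absurd h h2F
    · exact h
  have hv0 : (v1 * v2) ^ 2 = 0 := by rw [← hd2, hd0]; simp
  exact (mul_ne_zero hv10 hv20) (pow_eq_zero_iff (n := 2) (by norm_num) |>.mp hv0)

lemma frob_lemma {F : Type*} [Field F] [Fintype F] {q : ℕ}
    (hcard : Fintype.card F = q ^ 2)
    {p e : ℕ} (hp : p.Prime) (he : 0 < e) (hq : q = p ^ e) :
    CharP F p := by
  have hrc : CharP F (ringChar F) := ringChar.charP F
  have hrp : (ringChar F).Prime := CharP.char_is_prime F (ringChar F)
  obtain ⟨n, -, hcard'⟩ := FiniteField.card F (ringChar F)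
  have : p ^ (e * 2) = ringChar F ^ (n : ℕ) := by
    rw [← hcard', hcard, hq, ← pow_mul]
  have hdvd : p ∣ ringChar F ^ (n : ℕ) := by
    rw [← this]
    exact dvd_pow_self p (by positivity)
  have : p = ringChar F :=
    (Nat.prime_dvd_prime_iff_eq hp hrp).mp (hp.dvd_of_dvd_pow hdvd)
  rw [this]; exact hrc

lemma frob_add {F : Type*} [Field F] {q p e : ℕ} (hp : p.Prime) [CharP F p]
    (hq : q = p ^ e) : ∀ a b : F, (a + b) ^ q = a ^ q + b ^ q := by
  intro a b
  haveI : Fact p.Prime := ⟨hp⟩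
  rw [hq]
  exact add_pow_char_pow (x := a) (y := b) p e

/-- Standard setup, `ℓ ≥ 3`, `q ≡ 2^ℓ − 1 (mod 2^(ℓ+1))`. Property NPi for an
even index holds iff there exists nonzero `x ∈ L` such that `x² − α` is a
nonzero square in `L` for every nonzero square `α` of `K`. -/
theorem propertyNPi_even_iff (q0 s q ℓ : ℕ) (hq0 : IsPrimePow q0)
    (hq0odd : Odd q0) (hs : Odd s) (hq : q = q0 ^ s) (hℓ : 3 ≤ ℓ)
    (hqmod : q ≡ 2 ^ ℓ - 1 [MOD 2 ^ (ℓ + 1)])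
    (F : Type*) [Field F] [Fintype F] (hF : Fintype.card F = q ^ 2)
    (K : Subfield F) (hK : Nat.card K = q0)
    (L : Subfield F) (hL : Nat.card L = q) (hKL : K ≤ L)
    (m : ℕ) (hm : m = (q0 - 1) / 2)
    (Hm : Subgroup Fˣ) (hHm : Nat.card Hm = m * (q + 1)) :
    (∃ γ : Fˣ, (γ ^ (q - 1)) ^ 2 ^ (ℓ - 1) = 1 ∧
        ∀ h1 h2 : Fˣ, h1 ∈ Hm → h2 ∈ Hm → (γ : F) ≠ (h1 : F) + (h2 : F)) ↔
      (∃ x : F, x ∈ L ∧ x ≠ 0 ∧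
        ∀ α : F, α ∈ K → α ≠ 0 → (∃ w ∈ K, α = w ^ 2) →
          (x ^ 2 - α ≠ 0 ∧ ∃ w ∈ L, x ^ 2 - α = w ^ 2)) := by
  classical
  -- numerics
  have hq02 : q0 % 2 = 1 := Nat.odd_iff.mp hq0odd
  have hq03 : 3 ≤ q0 := by have := hq0.two_le; omega
  have hs1 : 1 ≤ s := hs.pos
  have hqodd : Odd q := hq ▸ hq0odd.pow
  have hq2 : q % 2 = 1 := Nat.odd_iff.mp hqodd
  have hq3 : 3 ≤ q := by
    rw [hq]; calc 3 ≤ q0 := hq03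
    _ ≤ q0 ^ s := Nat.le_self_pow (by omega) q0
  have hm2 : 2 * m = q0 - 1 := by omega
  have hm1 : 1 ≤ m := by omega
  have hq21 : q ^ 2 - 1 = (q + 1) * (q - 1) := by
    have := Nat.sq_sub_sq q 1
    simpa using this
  have hq2pos : 1 ≤ q ^ 2 := Nat.one_le_two_pow.trans (Nat.pow_le_pow_left (by omega) 2)
  -- 2^ℓ ∣ q + 1
  have hdvd2l : 2 ^ ℓ ∣ q + 1 := by
    have hlt : 2 ^ ℓ - 1 < 2 ^ (ℓ + 1) := by
      have h1 : 2 ^ ℓ < 2 ^ (ℓ + 1) := Nat.pow_lt_pow_right (by omega) (by omega)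
      omega
    have hmod : q % 2 ^ (ℓ + 1) = 2 ^ ℓ - 1 := by
      have := hqmod
      unfold Nat.ModEq at this
      rw [this, Nat.mod_eq_of_lt hlt]
    have hB : 2 ^ (ℓ + 1) = 2 * 2 ^ ℓ := by rw [pow_succ]; ring
    have hpos : 1 ≤ 2 ^ ℓ := Nat.one_le_two_pow
    obtain ⟨k, hk⟩ : ∃ k, q = 2 ^ (ℓ + 1) * k + (2 ^ ℓ - 1) :=
      ⟨q / 2 ^ (ℓ + 1), by rw [← hmod]; exact (Nat.div_add_mod q _).symm⟩
    exact ⟨2 * k + 1, by rw [hk, hB]; ring_nf; omega⟩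
  -- q0 - 1 ∣ q - 1  and m*(q+1) ∣ q^2 - 1
  have hq0dvd : q0 - 1 ∣ q - 1 := by
    rw [hq]
    simpa using Nat.sub_dvd_pow_sub_pow q0 1 s
  obtain ⟨k0, hk0⟩ := hq0dvd
  have hMdvd : m * (q + 1) ∣ q ^ 2 - 1 := by
    refine ⟨2 * k0, ?_⟩
    rw [hq21, hk0, ← hm2]; ring
  -- characteristic
  obtain ⟨p, kp, hpp, hkp0, hpk⟩ := hq0
  have hp : p.Prime := hpp.nat_prime
  have hqpe : q = p ^ (kp * s) := by rw [hq, ← hpk, pow_mul]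
  haveI hcharp : CharP F p := frob_lemma hF hp (Nat.mul_pos hkp0 hs1) hqpe
  have hfrob : ∀ a b : F, (a + b) ^ q = a ^ q + b ^ q := frob_add hp hqpe
  have hpodd : p ≠ 2 := by
    intro h
    have hdq : p ∣ q := by
      rw [hqpe]; exact dvd_pow_self p (Nat.mul_pos hkp0 hs1).ne'
    rw [h] at hdq
    omega
  have h2F : (2 : F) ≠ 0 := by
    intro h
    have h2 : ((2 : ℕ) : F) = 0 := by push_cast; exact h
    have hpd : p ∣ 2 := (CharP.cast_eq_zero_iff F p 2).mp h2
    exact hpodd ((Nat.prime_dvd_prime_iff_eq hp Nat.prime_two).mp hpd)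
  -- membership characterizations
  have memL : ∀ x : F, x ∈ L ↔ x ^ q = x :=
    subfield_mem_iff_pow L (by omega) hL
  have memK : ∀ x : F, x ∈ K ↔ x ^ q0 = x :=
    subfield_mem_iff_pow K (by omega) hK
  have memHm : ∀ g : Fˣ, g ∈ Hm ↔ g ^ (m * (q + 1)) = 1 :=
    subgroup_mem_iff_pow Hm (Nat.mul_pos (by omega) (by omega)) hHm
  have sqL : ∀ u : F, u ∈ L → u ≠ 0 →
      ((∃ w ∈ L, u = w ^ 2) ↔ u ^ ((q - 1) / 2) = 1) :=
    fun u hu hu0 => subfield_sq_iff L hq3 hq2 hL hu hu0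
  have sqK : ∀ u : F, u ∈ K → u ≠ 0 →
      ((∃ w ∈ K, u = w ^ 2) ↔ u ^ ((q0 - 1) / 2) = 1) :=
    fun u hu hu0 => subfield_sq_iff K hq03 hq02 hK hu hu0
  have hLpow : ∀ x : F, x ∈ L → x ≠ 0 → x ^ (q - 1) = 1 := by
    intro x hx hx0
    have hxq := (memL x).1 hx
    have h1 : x ^ (q - 1) * x = 1 * x := by
      rw [← pow_succ]
      have he : q - 1 + 1 = q := by omega
      rw [he, hxq, one_mul]
    exact mul_right_cancel₀ hx0 h1
  have hKpow : ∀ x : F, x ∈ K → x ≠ 0 → x ^ (q0 - 1) = 1 := by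
    intro x hx hx0
    have hxq := (memK x).1 hx
    have h1 : x ^ (q0 - 1) * x = 1 * x := by
      rw [← pow_succ]
      have he : q0 - 1 + 1 = q0 := by omega
      rw [he, hxq, one_mul]
    exact mul_right_cancel₀ hx0 h1
  have hUcard : ∀ u : Fˣ, (u : F) ^ (q ^ 2 - 1) = 1 := by
    intro u
    have h1 : u ^ (q ^ 2 - 1) = 1 := by
      rw [← hF, ← Fintype.card_units]
      exact pow_card_eq_one
    have := congrArg (Units.val) h1
    push_cast at this
    exact this
  have hUq2 : ∀ u : Fˣ, (u : F) ^ q ^ 2 = (u : F) := by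
    intro u
    have he : q ^ 2 - 1 + 1 = q ^ 2 := by omega
    calc (u : F) ^ q ^ 2 = (u : F) ^ (q ^ 2 - 1 + 1) := by rw [he]
    _ = (u : F) ^ (q ^ 2 - 1) * (u : F) := by rw [pow_succ]
    _ = (u : F) := by rw [hUcard u, one_mul]
  constructor
  · -- (a) → (b)
    rintro ⟨γ, hγpow, hγsum⟩
    have hγ0 : (γ : F) ≠ 0 := Units.ne_zero γ
    have hγpowF : (γ : F) ^ ((q - 1) * 2 ^ (ℓ - 1)) = 1 := by
      have h2 := congrArg Units.val hγpow
      push_cast at h2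
      rw [← pow_mul] at h2
      exact h2
    have hγq2 : (γ : F) ^ q ^ 2 = γ := hUq2 γ
    have hnL : (γ : F) ^ (q + 1) ∈ L := by
      rw [memL, ← pow_mul, show (q + 1) * q = q ^ 2 + q from by ring, pow_add, hγq2,
        ← pow_succ']
    have hn0 : (γ : F) ^ (q + 1) ≠ 0 := pow_ne_zero _ hγ0
    obtain ⟨t2, ht2⟩ := hdvd2l
    obtain ⟨a2, ha2'⟩ : ∃ a, (q - 1) / 2 = a := ⟨_, rfl⟩
    have hll : (2 : ℕ) ^ ℓ = 2 * 2 ^ (ℓ - 1) := by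
      rw [← pow_succ']
      congr 1
      omega
    have hexp : (q + 1) * ((q - 1) / 2) = ((q - 1) * 2 ^ (ℓ - 1)) * t2 := by
      rw [ha2']
      have h2a : q - 1 = 2 * a2 := by omega
      rw [ht2, hll, h2a]
      ring
    have hnhalf : ((γ : F) ^ (q + 1)) ^ ((q - 1) / 2) = 1 := by
      rw [← pow_mul, hexp, pow_mul, hγpowF, one_pow]
    obtain ⟨x, hxL', hx⟩ := (sqL _ hnL hn0).2 hnhalf
    have hx0 : x ≠ 0 := by
      intro h
      apply hn0
      rw [hx, h]
      ring
    refine ⟨x, hxL', hx0, ?_⟩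
    intro α hαK hα0 hαsq
    by_contra hcon
    obtain ⟨w0, hw0K, hw0⟩ := hαsq
    have hw00 : w0 ≠ 0 := by
      intro h
      apply hα0
      rw [hw0, h]
      ring
    have h2K : (2 : F) ∈ K := by
      have := natCast_mem K 2
      push_cast at this
      exact this
    obtain ⟨α1, hα1def⟩ : ∃ a : F, a = w0 / 2 := ⟨_, rfl⟩
    have hα1K : α1 ∈ K := hα1def ▸ K.div_mem hw0K h2K
    have hα10 : α1 ≠ 0 := hα1def ▸ div_ne_zero hw00 h2F
    have hα1q : α1 ^ q = α1 := (memL _).1 (hKL hα1K)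
    have hα14 : 4 * α1 ^ 2 = α := by
      rw [hα1def, hw0]
      field_simp
      ring
    obtain ⟨c, hc⟩ : ∃ c, q + 1 = 2 * c := ⟨(q + 1) / 2, by omega⟩
    have hα1M : α1 ^ (m * (q + 1)) = 1 := by
      have he : m * (q + 1) = (q0 - 1) * c := by rw [hc, ← hm2]; ring
      rw [he, pow_mul, hKpow _ hα1K hα10, one_pow]
    have h2L : (2 : F) ∈ L := hKL h2K
    obtain ⟨y, hydef⟩ : ∃ y : F, y = x ^ 2 / α1 ^ 2 - 2 := ⟨_, rfl⟩
    have hyL : y ∈ L :=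
      hydef ▸ L.sub_mem (L.div_mem (L.pow_mem hxL' 2) (L.pow_mem (hKL hα1K) 2)) h2L
    have hyq : y ^ q = y := (memL y).1 hyL
    have hy2 : y + 2 = x ^ 2 / α1 ^ 2 := by rw [hydef]; ring
    have hy2ne : y + 2 ≠ 0 := by
      rw [hy2]
      exact div_ne_zero (pow_ne_zero _ hx0) (pow_ne_zero _ hα10)
    have hγN : (γ : F) ^ (q + 1) = α1 ^ 2 * (y + 2) := by
      rw [hy2, hx]
      field_simp
    have hD : y ^ 2 - 4 = x ^ 2 * (x ^ 2 - α) / α1 ^ 4 := by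
      rw [hydef, ← hα14]
      field_simp
      ring
    have hδex : ∃ δ : F, δ ^ 2 = y ^ 2 - 4 ∧ δ ^ q = -δ := by
      by_cases hA : x ^ 2 - α = 0
      · refine ⟨0, ?_, by rw [zero_pow (by omega), neg_zero]⟩
        rw [hD, hA]
        ring
      · have hB : ¬∃ w ∈ L, x ^ 2 - α = w ^ 2 := fun hw => hcon ⟨hA, hw⟩
        have h4L : (4 : F) ∈ L := by
          have := natCast_mem L 4
          push_cast at this
          exact this
        have hDL : y ^ 2 - 4 ∈ L := L.sub_mem (L.pow_mem hyL 2) h4L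
        have hD0 : y ^ 2 - 4 ≠ 0 := by
          rw [hD]
          exact div_ne_zero (mul_ne_zero (pow_ne_zero _ hx0) hA) (pow_ne_zero _ hα10)
        have hrc : ringChar F = p := ringChar.eq F p
        have hsqF : IsSquare (y ^ 2 - 4) := by
          rw [FiniteField.isSquare_iff (by rw [hrc]; exact hpodd) hD0, hF]
          have hql : q ^ 2 / 2 = (q - 1) * c := by
            have h3 : q ^ 2 - 1 = 2 * ((q - 1) * c) := by
              rw [hq21, hc]
              ring
            have hq2odd : q ^ 2 % 2 = 1 := Nat.odd_iff.mp hqodd.pow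
            omega
          rw [hql, pow_mul, hLpow _ hDL hD0, one_pow]
        obtain ⟨r, hr⟩ := hsqF
        have hr2 : r ^ 2 = y ^ 2 - 4 := by rw [sq, ← hr]
        have hDq : (y ^ 2 - 4) ^ q = y ^ 2 - 4 := (memL _).1 hDL
        have hrq2 : (r ^ q) ^ 2 = r ^ 2 := by
          rw [← pow_mul, mul_comm q 2, pow_mul, hr2, hDq]
        have hrcases : r ^ q = r ∨ r ^ q = -r := by
          have h0 : (r ^ q - r) * (r ^ q + r) = 0 := by linear_combination hrq2
          rcases mul_eq_zero.mp h0 with h | h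
          · left; linear_combination h
          · right; linear_combination h
        rcases hrcases with h | h
        · exfalso
          apply hB
          refine ⟨r * α1 ^ 2 / x, ?_, ?_⟩
          · exact L.div_mem (L.mul_mem ((memL r).2 h) (L.pow_mem (hKL hα1K) 2)) hxL'
          · have h2 : r ^ 2 = x ^ 2 * (x ^ 2 - α) / α1 ^ 4 := by rw [hr2, hD]
            field_simp at h2 ⊢
            linear_combination (-1 : F) * h2
        · exact ⟨r, hr2, h⟩
    obtain ⟨δ, hδ2, hδq⟩ := hδex
    obtain ⟨g1, g2, hg1, hg2, hgs⟩ :=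
      lemB hqodd (mul_comm m (q + 1)) hfrob h2F hγ0 hα10 hyq hα1q hα1M hy2ne hγN hδ2 hδq
    have hM0 : m * (q + 1) ≠ 0 := (Nat.mul_pos (by omega) (by omega)).ne'
    have hg10 : g1 ≠ 0 := by
      intro h
      rw [h, zero_pow hM0] at hg1
      exact zero_ne_one hg1
    have hg20 : g2 ≠ 0 := by
      intro h
      rw [h, zero_pow hM0] at hg2
      exact zero_ne_one hg2
    have hu1 : Units.mk0 g1 hg10 ∈ Hm := by
      rw [memHm, ← Units.val_eq_one]
      push_cast
      exact hg1
    have hu2 : Units.mk0 g2 hg20 ∈ Hm := by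
      rw [memHm, ← Units.val_eq_one]
      push_cast
      exact hg2
    exact hγsum _ _ hu1 hu2 (by simpa using hgs)
  · -- (b) → (a)
    rintro ⟨x, hxL', hx0, Hb⟩
    refine ⟨Units.mk0 x hx0, ?_, ?_⟩
    · have hx1 : x ^ (q - 1) = 1 := hLpow x hxL' hx0
      have h1 : (Units.mk0 x hx0) ^ (q - 1) = 1 := by
        rw [← Units.val_eq_one]
        push_cast
        exact hx1
      rw [h1, one_pow]
    · intro u1 u2 hu1 hu2 heq
      simp only [Units.val_mk0] at heq
      have humem : ∀ u : Fˣ, u ∈ Hm →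
          ∃ w : F, w ∈ K ∧ (u : F) ^ (q + 1) = w ^ 2 := by
        intro u hu
        have huM : ((u : F)) ^ (m * (q + 1)) = 1 := by
          have h1 := (memHm u).1 hu
          have h2 := congrArg Units.val h1
          push_cast at h2; exact h2
        have hAm : ((u : F) ^ (q + 1)) ^ m = 1 := by
          rw [← pow_mul, mul_comm]; exact huM
        have hA0 : (u : F) ^ (q + 1) ≠ 0 := pow_ne_zero _ (Units.ne_zero u)
        have hAK : (u : F) ^ (q + 1) ∈ K := by
          rw [memK]
          have h1 : ((u : F) ^ (q + 1)) ^ (q0 - 1) = 1 := by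
            rw [← hm2, mul_comm 2 m, pow_mul, hAm, one_pow]
          calc ((u : F) ^ (q + 1)) ^ q0
              = ((u : F) ^ (q + 1)) ^ (q0 - 1) * (u : F) ^ (q + 1) := by
                rw [← pow_succ]; congr 1; omega
            _ = (u : F) ^ (q + 1) := by rw [h1, one_mul]
        obtain ⟨w, hwK, hw⟩ := (sqK _ hAK hA0).2 (by rw [← hm]; exact hAm)
        exact ⟨w, hwK, hw⟩
      obtain ⟨wα, hwαK, hwα⟩ := humem u1 hu1
      obtain ⟨wβ, hwβK, hwβ⟩ := humem u2 hu2
      have mkH : ∀ c : F, c ∈ K →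
          ∃ v : F, v ≠ 0 ∧ v ^ q = v ∧ x ^ 2 - c ^ 2 = v ^ 2 := by
        intro c hc
        by_cases hc0 : c = 0
        · exact ⟨x, hx0, (memL x).1 hxL', by rw [hc0]; ring⟩
        · have hcK2 : c ^ 2 ∈ K := K.pow_mem hc 2
          have hc20 : c ^ 2 ≠ 0 := pow_ne_zero _ hc0
          obtain ⟨hne, v, hvL, hv⟩ := Hb (c ^ 2) hcK2 hc20 ⟨c, hc, rfl⟩
          have hv0 : v ≠ 0 := by
            intro h
            rw [h] at hv
            apply hne
            rw [hv]; ring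
          exact ⟨v, hv0, (memL v).1 hvL, hv⟩
      obtain ⟨v1, hv10, hv1q, hv1⟩ := mkH (wα + wβ) (K.add_mem hwαK hwβK)
      obtain ⟨v2, hv20, hv2q, hv2⟩ := mkH (wα - wβ) (K.sub_mem hwαK hwβK)
      exact lemC hqodd hfrob h2F hx0 ((memL x).1 hxL') (hUq2 u1) (hUq2 u2)
        hwα hwβ ⟨v1, hv10, hv1q, hv1⟩ ⟨v2, hv20, hv2q, hv2⟩ heq
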